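/- (Theorem 3, feasibility rate) Let σ > 0 and α ∈ (1/2, 1], and suppose the tolerance sequence is η_k = σ/k^{2α} for all k ≥ 1. Then for all k ≥ 1: ‖Ax^{k+1} − b‖² ≤ ψ_k := (2/β)·(C + √σ)/k^α, where C := 4√(3((3/2)θσ + 1)σ/θ) + (4/3)·max{δ₁, 4/θ}. -/

import Mathlib

set_option maxHeartbeats 1000000

open RealInnerProductSpace Filter Topology

lemma ial_grad_ineq {F : Type*} [NormedAddCommGroup F] [InnerProductSpace ℝ F] [CompleteSpace F]
    {f : F → ℝ} (hf : ConvexOn ℝ Set.univ f) {x G : F} (h : HasGradientAt f G x)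
    (y : F) : ⟪G, y - x⟫ ≤ f y - f x := by
  set v := y - x with hv
  have hline : HasDerivAt (fun t : ℝ => x + t • v) v 0 := by
    simpa using ((hasDerivAt_id (0 : ℝ)).smul_const v).const_add x
  have hcomp : HasDerivAt (fun t : ℝ => f (x + t • v)) ⟪G, v⟫ 0 := by
    have h0 : HasFDerivAt f ((InnerProductSpace.toDual ℝ F) G) ((fun t : ℝ => x + t • v) 0) := by
      simpa using h.hasFDerivAt
    have := h0.comp_hasDerivAt 0 hline
    simp at this
    exact this
  have hslope : Tendsto (slope (fun t : ℝ => f (x + t • v)) 0) (𝓝[>] 0) (𝓝 ⟪G, v⟫) := by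
    have := (hasDerivAt_iff_tendsto_slope).mp hcomp
    exact this.mono_left (nhdsWithin_mono _ (fun t ht => ne_of_gt ht))
  refine le_of_tendsto hslope ?_
  filter_upwards [Ioc_mem_nhdsGT_of_mem (Set.mem_Ico.mpr ⟨le_refl (0:ℝ), one_pos⟩)] with t ht
  obtain ⟨ht0, ht1⟩ := ht
  have hconv := hf.2 (Set.mem_univ y) (Set.mem_univ x) (le_of_lt ht0) (by linarith) (by ring : t + (1 - t) = 1)
  have hpt : t • y + (1 - t) • x = x + t • v := by
    rw [hv]; module
  rw [hpt] at hconv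
  have : slope (fun t : ℝ => f (x + t • v)) 0 t = (f (x + t • v) - f x) / t := by
    simp [slope_def_field]
  rw [this]
  rw [div_le_iff₀ ht0]
  have hsm : t • f y + (1 - t) • f x = t * f y + (1 - t) * f x := rfl
  nlinarith [hconv]

lemma ial_p2_arith {θ σ M K K' η UK RK : ℝ} (hθ : 0 < θ) (hσ : 0 < σ)
    (hM1 : 21*θ*σ + 16 ≤ 3*θ*M)
    (hK1 : 1 ≤ K) (hKK' : K ≤ K') (hK'K : K' ≤ K + 1)
    (hη : η * K^2 = σ) (hUK : UK * K = M) (hRK : RK * K' = M)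
    (hηpos : 0 < η) (hUKpos : 0 < UK) (hRKpos : 0 < RK)
    (hM0 : 0 < M) (hM7σ : 7*σ ≤ M)
    (h3 : 1 < 4*θ*(UK - η)) :
    16*θ*η + 1 ≤ 8*θ*RK := by
  have hKpos : (0:ℝ) < K := lt_of_lt_of_le one_pos hK1
  have hK'pos : (0:ℝ) < K' := lt_of_lt_of_le hKpos hKK'
  have hK2pos : (0:ℝ) < K^2 := by positivity
  by_cases hK2 : K ≤ 2
  · have hK'3 : K' ≤ 3 := by linarith
    have hησ : η ≤ σ := by
      nlinarith [mul_nonneg (le_of_lt hηpos) (by nlinarith [sq_nonneg (K-1)] : (0:ℝ) ≤ K^2 - 1)]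
    have hRKM3 : M ≤ 3*RK := by
      nlinarith [mul_nonneg (le_of_lt hRKpos) (by linarith : (0:ℝ) ≤ 3 - K')]
    linarith [mul_le_mul_of_nonneg_left hησ (le_of_lt hθ),
      mul_le_mul_of_nonneg_left hRKM3 (le_of_lt hθ), hM1, mul_pos hθ hσ]
  · push_neg at hK2
    have h12 : 12*η ≤ UK := by
      have e : UK*K^2 = M*K := by linear_combination K*hUK
      have e2 : M*2 ≤ M*K := mul_le_mul_of_nonneg_left hK2.le hM0.le
      have e3 : (12*η)*K^2 = 12*σ := by linear_combination 12*hη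
      refine le_of_mul_le_mul_right ?_ hK2pos
      linarith [e, e2, e3, hM7σ]
    have h5 : 5*K' ≤ 8*K := by linarith
    have h58 : 5*UK ≤ 8*RK := by
      have e1 : UK*K*K' = M*K' := by rw [hUK]
      have e2 : RK*K'*K = M*K := by rw [hRK]
      refine le_of_mul_le_mul_right ?_ (mul_pos hKpos hK'pos)
      linarith [e1, e2, mul_le_mul_of_nonneg_left h5 hM0.le]
    have hcase : 1 + 4*θ*η ≤ 4*θ*UK := by nlinarith [h3]
    linarith [mul_le_mul_of_nonneg_left h12 hθ.le, mul_le_mul_of_nonneg_left h58 hθ.le, hcase]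

lemma ial_step_core {θ σ M K K' η UK RK d d' : ℝ} (hθ : 0 < θ) (hσ : 0 < σ)
    (hM1 : 21*θ*σ + 16 ≤ 3*θ*M)
    (hM2 : 2*σ ≤ θ*M^2)
    (hK1 : 1 ≤ K) (hKK' : K ≤ K') (hK'K : K' ≤ K + 1)
    (hη : η * K^2 = σ) (hUK : UK * K = M) (hRK : RK * K' = M)
    (hd0 : 0 ≤ d) (hdU : d ≤ UK)
    (hr1 : d' ≤ d + η)
    (hr2 : η ≤ d → d' ≤ d + η - 2*θ*(d - η)^2) :
    d' ≤ RK := by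
  have hKpos : (0:ℝ) < K := lt_of_lt_of_le one_pos hK1
  have hK'pos : (0:ℝ) < K' := lt_of_lt_of_le hKpos hKK'
  have hK2pos : (0:ℝ) < K^2 := by positivity
  have hM0 : (0:ℝ) < M := by nlinarith [mul_pos hθ hσ]
  have hM7σ : 7*σ ≤ M := by nlinarith
  have hMθ : 16/3*M ≤ θ*M^2 := by nlinarith
  have hηpos : 0 < η := by nlinarith
  have hUKpos : 0 < UK := by nlinarith
  have hRKpos : 0 < RK := by nlinarith
  have hKK2 : K ≤ K^2 := by nlinarith
  by_cases h1 : d + η ≤ RK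
  · linarith
  push_neg at h1
  by_cases h2 : d ≤ η
  · -- small d case: d' ≤ 2η ≤ RK
    have hx : (2*η)*(2*K^2) = 4*σ := by nlinarith [hη]
    have hRKK2 : M ≤ RK * (2*K^2) := by
      nlinarith [mul_nonneg (le_of_lt hRKpos) (by nlinarith : (0:ℝ) ≤ 2*K^2 - K')]
    have h2η : 2*η ≤ RK := by
      refine le_of_mul_le_mul_right ?_ (by positivity : (0:ℝ) < 2*K^2)
      linarith [hx, hRKK2, hM7σ]
    linarith
  push_neg at h2
  have hr2' := hr2 (le_of_lt h2)
  have hs0 : 0 ≤ d - η := by linarith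
  have hsu : d - η ≤ UK - η := by linarith
  have hu0 : 0 ≤ UK - η := le_trans hs0 hsu
  by_cases h3 : 4*θ*(UK - η) ≤ 1
  · -- P1 case
    have step1 : 2*θ*((UK-η)^2 - (d-η)^2) ≤ (UK-η) - (d-η) := by
      nlinarith [mul_nonneg (sub_nonneg.2 hsu) (by nlinarith : (0:ℝ) ≤ 1 - 2*θ*((UK-η)+(d-η)))]
    have hUKRK : RK ≤ UK := by nlinarith
    have hURK2 : (UK - RK) * K^2 ≤ M := by
      have hprod : (UK - RK) * (K * K') = M * (K' - K) := by nlinarith [hUK, hRK]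
      nlinarith [mul_le_mul_of_nonneg_left (mul_le_mul_of_nonneg_left hKK' (le_of_lt hKpos)) (sub_nonneg.2 hUKRK)]
    have hu7 : 7*η ≤ UK := by nlinarith
    have huK : 6*M ≤ 7*((UK-η)*K) := by nlinarith
    have step2 : (UK-η) + 2*η - RK ≤ 2*θ*(UK-η)^2 := by
      have hL : ((UK-η) + 2*η - RK)*K^2 ≤ M + σ := by nlinarith
      have hR : M + σ ≤ 2*θ*(UK-η)^2*K^2 := by
        have huK0 : 0 ≤ (UK-η)*K := by positivity
        have hsq : 36*M^2 ≤ 49*((UK-η)*K)^2 := by nlinarith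
        nlinarith [mul_le_mul_of_nonneg_left hsq (le_of_lt hθ)]
      refine le_of_mul_le_mul_right ?_ hK2pos
      nlinarith [le_trans hL hR]
    linarith [hr2', step1, step2]
  push_neg at h3
  · -- P2 case : d' ≤ 2η + 1/(8θ) ≤ RK
    have hvert : 8*θ*d' ≤ 16*θ*η + 1 := by
      nlinarith [sq_nonneg (4*θ*(d-η) - 1), mul_le_mul_of_nonneg_left hr2' (by linarith : (0:ℝ) ≤ 8*θ)]
    have hgoal8 := ial_p2_arith hθ hσ hM1 hK1 hKK' hK'K hη hUK hRK hηpos hUKpos hRKpos hM0 hM7σ h3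
    have h8 : (8*θ)*d' ≤ (8*θ)*RK := by linarith [le_trans hvert hgoal8]
    exact le_of_mul_le_mul_left h8 (by positivity)

lemma ial_rpow_facts {α : ℝ} (hα1 : 0 < α) (hα2 : α ≤ 1) (k : ℕ) (hk : 1 ≤ k) :
    1 ≤ ((k:ℝ))^α ∧ ((k:ℝ))^α ≤ (((k:ℝ)+1))^α ∧ (((k:ℝ)+1))^α ≤ ((k:ℝ))^α + 1
      ∧ ((k:ℝ))^(2*α) = (((k:ℝ))^α)^2 := by
  have hk0 : (0:ℝ) < (k:ℝ) := by exact_mod_cast hk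
  have hk1 : (1:ℝ) ≤ (k:ℝ) := by exact_mod_cast hk
  refine ⟨Real.one_le_rpow hk1 hα1.le, ?_, ?_, ?_⟩
  · exact Real.rpow_le_rpow hk0.le (by linarith) hα1.le
  · have h := NNReal.rpow_add_le_add_rpow (Real.toNNReal (k:ℝ)) 1 hα1.le hα2
    have := (NNReal.coe_le_coe).mpr h
    push_cast [NNReal.coe_rpow, Real.coe_toNNReal _ hk0.le] at this
    simpa [NNReal.rpow_natCast] using this
  · rw [mul_comm, Real.rpow_mul hk0.le]
    norm_num [Real.rpow_two]

lemma ial_seq_rate {θ σ M α : ℝ} (hθ : 0 < θ) (hσ : 0 < σ)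
    (hα1 : 0 < α) (hα2 : α ≤ 1)
    (hM1 : 21*θ*σ + 16 ≤ 3*θ*M) (hM2 : 2*σ ≤ θ*M^2)
    {δ : ℕ → ℝ} (hδ0 : ∀ k, 0 ≤ δ k) (hbase : δ 1 ≤ M)
    (hrec1 : ∀ k : ℕ, 1 ≤ k → δ (k+1) ≤ δ k + σ/((k:ℝ))^(2*α))
    (hrec2 : ∀ k : ℕ, 1 ≤ k → σ/((k:ℝ))^(2*α) ≤ δ k →
      δ (k+1) ≤ δ k + σ/((k:ℝ))^(2*α) - 2*θ*(δ k - σ/((k:ℝ))^(2*α))^2) :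
    ∀ k, 1 ≤ k → δ k ≤ M/((k:ℝ))^α := by
  intro k hk
  induction k, hk using Nat.le_induction with
  | base => simpa [Real.one_rpow] using hbase
  | succ k hk ih =>
    obtain ⟨hK1, hKK', hK'K, hexp⟩ := ial_rpow_facts hα1 hα2 k hk
    have hKpos : (0:ℝ) < (k:ℝ)^α := lt_of_lt_of_le one_pos hK1
    have hK'pos : (0:ℝ) < ((k:ℝ)+1)^α := lt_of_lt_of_le hKpos hKK'
    have hcast : (((k+1:ℕ)):ℝ) = (k:ℝ)+1 := by push_cast; ring
    rw [hcast]
    have hηK : (σ/((k:ℝ))^(2*α)) * ((k:ℝ)^α)^2 = σ := by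
      rw [← hexp]
      exact div_mul_cancel₀ σ (by rw [hexp]; positivity)
    refine ial_step_core (η := σ/((k:ℝ))^(2*α)) hθ hσ hM1 hM2 hK1 hKK' hK'K hηK
      (div_mul_cancel₀ M (ne_of_gt hKpos)) (div_mul_cancel₀ M (ne_of_gt hK'pos))
      (hδ0 k) ih (hrec1 k hk) (hrec2 k hk)

lemma ial_key {E F : Type*} [NormedAddCommGroup E] [InnerProductSpace ℝ E] [CompleteSpace E]
    [NormedAddCommGroup F] [InnerProductSpace ℝ F] [CompleteSpace F]
    (A : E →L[ℝ] F) (b : F) (f g : E → ℝ) (f' : E → E) (β ηj : ℝ)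
    (xp y : E) (lamj μ : F)
    (hfi : ⟪f' xp, y - xp⟫ ≤ f y - f xp)
    (hap : ⟪f' xp + A.adjoint (lamj + β • (A xp - b)), xp - y⟫ + g xp - g y ≤ ηj) :
    (f xp + ⟪μ, A xp - b⟫ + β/2*‖A xp - b‖^2 + g xp) - ηj
      + ⟪μ - lamj, A y - A xp⟫ + β/2*‖A y - A xp‖^2
      ≤ f y + ⟪μ, A y - b⟫ + β/2*‖A y - b‖^2 + g y := by
  have hAy : A y - b = (A xp - b) + (A y - A xp) := by abel
  have hnormβ : β/2*‖A y - b‖^2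
      = β/2*‖A xp - b‖^2 + β*⟪A xp - b, A y - A xp⟫ + β/2*‖A y - A xp‖^2 := by
    rw [hAy, norm_add_sq_real]; ring
  have hinn : ⟪μ, A y - b⟫ = ⟪μ, A xp - b⟫ + ⟪μ, A y - A xp⟫ := by
    rw [hAy, inner_add_right]
  have hμw : ⟪μ - lamj, A y - A xp⟫ = ⟪μ, A y - A xp⟫ - ⟪lamj, A y - A xp⟫ :=
    inner_sub_left _ _ _
  have hadj : ⟪A.adjoint (lamj + β • (A xp - b)), xp - y⟫
      = -⟪lamj, A y - A xp⟫ - β*⟪A xp - b, A y - A xp⟫ := by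
    rw [ContinuousLinearMap.adjoint_inner_left, map_sub]
    have h1 : A xp - A y = -(A y - A xp) := by abel
    rw [h1, inner_neg_right, inner_add_left, real_inner_smul_left]
    ring
  have hfx : ⟪f' xp + A.adjoint (lamj + β • (A xp - b)), xp - y⟫
      = ⟪f' xp, xp - y⟫ + ⟪A.adjoint (lamj + β • (A xp - b)), xp - y⟫ :=
    inner_add_left _ _ _
  have hneg : ⟪f' xp, xp - y⟫ = -⟪f' xp, y - xp⟫ := by
    have h2 : xp - y = -(y - xp) := by abel
    rw [h2, inner_neg_right]
  rw [hfx, hadj, hneg] at hap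
  linarith [hap, hfi, hnormβ, hinn, hμw]

/-- **Theorem 3 (feasibility rate).**
Let `σ > 0`, `α ∈ (1/2, 1]`, and `η_k = σ/k^{2α}` for all `k ≥ 1`. Then for all `k ≥ 1`:
`‖Ax^{k+1} − b‖² ≤ ψ_k := (2/β)(C + √σ)/k^α`, where `C := 4√(3((3/2)θσ + 1)σ/θ) + (4/3)·max{δ₁, 4/θ}`. -/
theorem ial_feasibility_rate
    {n m : ℕ}
    (A : EuclideanSpace ℝ (Fin n) →L[ℝ] EuclideanSpace ℝ (Fin m))
    (b : EuclideanSpace ℝ (Fin m))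
    (f g : EuclideanSpace ℝ (Fin n) → ℝ)
    (f' : EuclideanSpace ℝ (Fin n) → EuclideanSpace ℝ (Fin n))
    (hf : ConvexOn ℝ Set.univ f)
    (hf' : ∀ x, HasGradientAt f (f' x) x)
    (hg : ConvexOn ℝ Set.univ g)
    (β : ℝ) (hβ : 0 < β)
    (L : EuclideanSpace ℝ (Fin n) → EuclideanSpace ℝ (Fin m) → ℝ)
    (hL : ∀ x lam, L x lam
        = f x + ⟪lam, A x - b⟫ + β / 2 * ‖A x - b‖ ^ 2 + g x)
    (d : EuclideanSpace ℝ (Fin m) → ℝ)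
    (hd : ∀ lam, IsLeast (Set.range fun x => L x lam) (d lam))
    (x : ℕ → EuclideanSpace ℝ (Fin n))
    (lam : ℕ → EuclideanSpace ℝ (Fin m))
    (σ α : ℝ) (hσ : 0 < σ) (hα : 1 / 2 < α ∧ α ≤ 1)
    (η : ℕ → ℝ)
    (hη : ∀ k, 1 ≤ k → η k = σ / (k : ℝ) ^ (2 * α))
    (happrox : ∀ k, 1 ≤ k → ∀ y,
        ⟪f' (x (k + 1)) + A.adjoint (lam k + β • (A (x (k + 1)) - b)), x (k + 1) - y⟫
          + g (x (k + 1)) - g y ≤ η k)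
    (hlam : ∀ k, 1 ≤ k → lam (k + 1) = lam k + β • (A (x (k + 1)) - b))
    (lamstar : EuclideanSpace ℝ (Fin m))
    (hstar : ∀ μ, d μ ≤ d lamstar)
    (δ : ℕ → ℝ)
    (hδ : ∀ k, δ k = d lamstar - d (lam k))
    (B : ℝ)
    (hB : B = Real.sqrt (‖lam 1 - lamstar‖ ^ 2 + 2 * β * ∑' k : ℕ, η (k + 1)))
    (θ : ℝ)
    (hθ : θ = β / (4 * B ^ 2))
    (C : ℝ)
    (hC : C = 4 * Real.sqrt (3 * (3 / 2 * θ * σ + 1) * σ / θ)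
        + 4 / 3 * max (δ 1) (4 / θ)) :
    ∀ k, 1 ≤ k → ‖A (x (k + 1)) - b‖ ^ 2 ≤ 2 / β * ((C + Real.sqrt σ) / (k : ℝ) ^ α) := by
  obtain ⟨hα1, hα2⟩ := hα
  have hα0 : (0:ℝ) < α := by linarith
  have hδ0 : ∀ j, 0 ≤ δ j := fun j => by rw [hδ j]; linarith [hstar (lam j)]
  have hd_le : ∀ μ y, d μ ≤ L y μ := fun μ y => (hd μ).2 ⟨y, rfl⟩
  -- summability and B facts
  have h2α : 1 < 2*α := by linarith
  have hsum0 : Summable (fun j : ℕ => (1:ℝ)/(j:ℝ)^(2*α)) :=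
    Real.summable_one_div_nat_rpow.mpr h2α
  have hsum1 : Summable (fun j : ℕ => η (j+1)) := by
    refine (((summable_nat_add_iff 1).mpr hsum0).mul_left σ).congr fun j => ?_
    rw [hη (j+1) (by omega)]
    ring
  have hηpos' : ∀ j : ℕ, 0 ≤ η (j+1) := fun j => by
    rw [hη (j+1) (by omega)]
    positivity
  have htsum0 : 0 ≤ ∑' j : ℕ, η (j+1) := tsum_nonneg hηpos'
  have hS0 : 0 ≤ ‖lam 1 - lamstar‖^2 + 2*β*∑' j : ℕ, η (j+1) := by
    have : 0 ≤ 2*β*∑' j : ℕ, η (j+1) := by positivity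
    positivity
  have hB2 : B^2 = ‖lam 1 - lamstar‖^2 + 2*β*∑' j : ℕ, η (j+1) := by
    rw [hB, Real.sq_sqrt hS0]
  have hη1 : η 1 = σ := by
    rw [hη 1 le_rfl]
    norm_num
  have htσ : σ ≤ ∑' j : ℕ, η (j+1) := by
    have := Summable.le_tsum hsum1 0 (fun i _ => hηpos' i)
    simpa [hη1] using this
  have hB2pos : 0 < B^2 := by
    rw [hB2]; nlinarith [sq_nonneg ‖lam 1 - lamstar‖, mul_pos hβ hσ]
  have hBpos : 0 < B := by
    have hB0 : 0 ≤ B := hB ▸ Real.sqrt_nonneg _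
    nlinarith
  have hθpos : 0 < θ := by rw [hθ]; positivity
  have hθB : 4*θ*B^2 = β := by
    rw [hθ]; field_simp
  -- key consequences
  have hshift : ∀ j : ℕ, ∀ μ ν, L (x (j+1)) μ - L (x (j+1)) ν
      = ⟪μ - ν, A (x (j+1)) - b⟫ := by
    intro j μ ν
    rw [hL, hL, inner_sub_left]
    ring
  have ha : ∀ j : ℕ, 1 ≤ j → L (x (j+1)) (lam j) - η j ≤ d (lam j) := by
    intro j hj
    obtain ⟨x₀, hx₀⟩ := (hd (lam j)).1
    have hkey := ial_key A b f g f' β (η j) (x (j+1)) x₀ (lam j) (lam j)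
      (ial_grad_ineq hf (hf' (x (j+1))) x₀) (happrox j hj x₀)
    have hz : ⟪lam j - lam j, A x₀ - A (x (j+1))⟫ = (0:ℝ) := by
      simp
    have hw0 : 0 ≤ β/2*‖A x₀ - A (x (j+1))‖^2 := by positivity
    have e1 := hL (x (j+1)) (lam j)
    have e2 := hL x₀ (lam j)
    rw [hz] at hkey
    simp only [] at hx₀
    linarith [hkey, hx₀.le, hx₀.ge]
  have hb1 : ∀ j : ℕ, 1 ≤ j → L (x (j+1)) (lam (j+1)) - η j
      - β/2*‖A (x (j+1)) - b‖^2 ≤ d (lam (j+1)) := by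
    intro j hj
    obtain ⟨x₁, hx₁⟩ := (hd (lam (j+1))).1
    have hkey := ial_key A b f g f' β (η j) (x (j+1)) x₁ (lam j) (lam (j+1))
      (ial_grad_ineq hf (hf' (x (j+1))) x₁) (happrox j hj x₁)
    have hdiff : lam (j+1) - lam j = β • (A (x (j+1)) - b) := by
      rw [hlam j hj]; abel
    have hsm : ⟪lam (j+1) - lam j, A x₁ - A (x (j+1))⟫
        = β*⟪A (x (j+1)) - b, A x₁ - A (x (j+1))⟫ := by
      rw [hdiff, real_inner_smul_left]
    have hc : 0 ≤ β/2*(‖A (x (j+1)) - b‖^2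
        + 2*⟪A (x (j+1)) - b, A x₁ - A (x (j+1))⟫ + ‖A x₁ - A (x (j+1))‖^2) := by
      rw [← norm_add_sq_real]
      positivity
    have e1 := hL (x (j+1)) (lam (j+1))
    have e2 := hL x₁ (lam (j+1))
    rw [hsm] at hkey
    simp only [] at hx₁
    linarith [hkey, hx₁.le, hx₁.ge, hc]
  have hshiftval : ∀ j : ℕ, 1 ≤ j → L (x (j+1)) (lam (j+1))
      = L (x (j+1)) (lam j) + β*‖A (x (j+1)) - b‖^2 := by
    intro j hj
    have h1 := hshift j (lam (j+1)) (lam j)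
    have hdiff : lam (j+1) - lam j = β • (A (x (j+1)) - b) := by
      rw [hlam j hj]; abel
    rw [hdiff, real_inner_smul_left, real_inner_self_eq_norm_sq] at h1
    linarith
  have hI : ∀ j : ℕ, 1 ≤ j → δ (j+1) + β/2*‖A (x (j+1)) - b‖^2 ≤ δ j + η j := by
    intro j hj
    have h1 := hb1 j hj
    have h2 := hshiftval j hj
    have h3 := hd_le (lam j) (x (j+1))
    rw [hδ (j+1), hδ j]
    linarith
  have hII : ∀ j : ℕ, 1 ≤ j → δ j ≤ η j + ⟪lamstar - lam j, A (x (j+1)) - b⟫ := by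
    intro j hj
    have h1 := ha j hj
    have h2 := hd_le lamstar (x (j+1))
    have h3 := hshift j lamstar (lam j)
    rw [hδ j]
    linarith
  have hIII' : ∀ j : ℕ, 1 ≤ j → δ (j+1) ≤ η j + β/2*‖A (x (j+1)) - b‖^2
      + ⟪lamstar - lam (j+1), A (x (j+1)) - b⟫ := by
    intro j hj
    have h1 := hb1 j hj
    have h2 := hd_le lamstar (x (j+1))
    have h3 := hshift j lamstar (lam (j+1))
    rw [hδ (j+1)]
    linarith
  have hIII : ∀ j : ℕ, 1 ≤ j → ‖lam (j+1) - lamstar‖^2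
      ≤ ‖lam j - lamstar‖^2 + 2*β*η j - 2*β*δ (j+1) := by
    intro j hj
    have hsp : lam (j+1) - lamstar = (lam j - lamstar) + β • (A (x (j+1)) - b) := by
      rw [hlam j hj]; abel
    have hexp : ‖lam (j+1) - lamstar‖^2 = ‖lam j - lamstar‖^2
        + 2*(β*⟪lam j - lamstar, A (x (j+1)) - b⟫) + β^2*‖A (x (j+1)) - b‖^2 := by
      rw [hsp, norm_add_sq_real, real_inner_smul_right, norm_smul,
        Real.norm_eq_abs, mul_pow, sq_abs]
    have hsp2 : lamstar - lam (j+1) = -((lam j - lamstar) + β • (A (x (j+1)) - b)) := by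
      rw [hlam j hj]; abel
    have e : ⟪lamstar - lam (j+1), A (x (j+1)) - b⟫
        = -⟪lam j - lamstar, A (x (j+1)) - b⟫ - β*‖A (x (j+1)) - b‖^2 := by
      rw [hsp2, inner_neg_left, inner_add_left, real_inner_smul_left,
        real_inner_self_eq_norm_sq]
      ring
    have h' := hIII' j hj
    rw [e] at h'
    have h'' := mul_le_mul_of_nonneg_left h' (by linarith : (0:ℝ) ≤ 2*β)
    linarith [hexp, h'']
  -- boundedness of multipliers
  have hBbound : ∀ j : ℕ, 1 ≤ j → ‖lam j - lamstar‖^2 ≤ B^2 := by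
    have haux : ∀ i : ℕ, ‖lam (i+1) - lamstar‖^2
        ≤ ‖lam 1 - lamstar‖^2 + 2*β*∑ t ∈ Finset.range i, η (t+1) := by
      intro i
      induction i with
      | zero => simp
      | succ i ihh =>
        have h3 := hIII (i+1) (by omega)
        rw [Finset.sum_range_succ]
        have hδn := hδ0 (i+2)
        have : 0 ≤ 2*β*δ (i+2) := by positivity
        have hmul : 2*β*(∑ t ∈ Finset.range i, η (t+1) + η (i+1))
            = 2*β*∑ t ∈ Finset.range i, η (t+1) + 2*β*η (i+1) := by ring
        rw [hmul]
        linarith [h3, ihh]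
    intro j hj
    obtain ⟨i, rfl⟩ := Nat.exists_eq_add_of_le hj
    have h1 := haux i
    have hsum_le := Summable.sum_le_tsum (Finset.range i) (fun t _ => hηpos' t) hsum1
    have hsum_le2 := mul_le_mul_of_nonneg_left hsum_le (by linarith : (0:ℝ) ≤ 2*β)
    rw [hB2]
    have hco : 1 + i = i + 1 := by omega
    rw [hco]
    linarith
  have hlamB : ∀ j : ℕ, 1 ≤ j → ‖lam j - lamstar‖ ≤ B := by
    intro j hj
    nlinarith [hBbound j hj, norm_nonneg (lam j - lamstar), hBpos]
  -- recursions for the sequence lemma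
  have hrec1 : ∀ j : ℕ, 1 ≤ j → δ (j+1) ≤ δ j + σ/((j:ℝ))^(2*α) := by
    intro j hj
    have h1 := hI j hj
    rw [hη j hj] at h1
    nlinarith [sq_nonneg ‖A (x (j+1)) - b‖, hβ]
  have hrec2 : ∀ j : ℕ, 1 ≤ j → σ/((j:ℝ))^(2*α) ≤ δ j →
      δ (j+1) ≤ δ j + σ/((j:ℝ))^(2*α) - 2*θ*(δ j - σ/((j:ℝ))^(2*α))^2 := by
    intro j hj hge
    have h2 := hII j hj
    rw [hη j hj] at h2
    have hinn : ⟪lamstar - lam j, A (x (j+1)) - b⟫ ≤ B*‖A (x (j+1)) - b‖ := by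
      refine le_trans (real_inner_le_norm _ _) ?_
      rw [norm_sub_rev]
      exact mul_le_mul_of_nonneg_right (hlamB j hj) (norm_nonneg _)
    have hsq : (δ j - σ/((j:ℝ))^(2*α))^2 ≤ B^2*‖A (x (j+1)) - b‖^2 := by
      nlinarith [h2, hinn, norm_nonneg (A (x (j+1)) - b), hBpos,
        mul_nonneg hBpos.le (norm_nonneg (A (x (j+1)) - b))]
    have h4 : 2*θ*(δ j - σ/((j:ℝ))^(2*α))^2 ≤ β/2*‖A (x (j+1)) - b‖^2 := by
      have h5 := mul_le_mul_of_nonneg_left hsq (by linarith : (0:ℝ) ≤ 2*θ)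
      have hEq : 2*θ*(B^2*‖A (x (j+1)) - b‖^2) = β/2*‖A (x (j+1)) - b‖^2 := by
        linear_combination (‖A (x (j+1)) - b‖^2/2) * hθB
      linarith
    have h1 := hI j hj
    rw [hη j hj] at h1
    linarith
  -- constants
  have hParg : 0 ≤ 3*(3/2*θ*σ+1)*σ/θ := by positivity
  have hPpos : 0 < Real.sqrt (3*(3/2*θ*σ+1)*σ/θ) := Real.sqrt_pos.mpr (by positivity)
  set P := Real.sqrt (3*(3/2*θ*σ+1)*σ/θ) with hPdef
  have hPsq : P^2 = 3*(3/2*θ*σ+1)*σ/θ := Real.sq_sqrt hParg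
  have hθP : θ*P^2 = 9/2*θ*σ^2 + 3*σ := by
    rw [hPsq]; field_simp; ring
  have hP2σ : 2*σ ≤ P := by
    have hP24 : 4*σ^2 ≤ P^2 := by
      nlinarith [hθP, mul_pos hθpos (mul_pos hσ hσ)]
    nlinarith [hP24, hPpos.le, hσ]
  have hδ1D : δ 1 ≤ max (δ 1) (4/θ) := le_max_left _ _
  have hθD : 4/θ ≤ max (δ 1) (4/θ) := le_max_right _ _
  have hD0 : 0 ≤ max (δ 1) (4/θ) := le_trans (by positivity) hθD
  have hCval : C = 4*P + 4/3*max (δ 1) (4/θ) := hC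
  have hMδ1 : δ 1 ≤ C - σ := by
    rw [hCval]; linarith
  have hCexp : θ*C = 4*(θ*P) + 4/3*(θ*max (δ 1) (4/θ)) := by rw [hCval]; ring
  have hθDge : 4 ≤ θ*max (δ 1) (4/θ) := by
    have e4 : θ*(4/θ) = 4 := by field_simp
    calc (4:ℝ) = θ*(4/θ) := e4.symm
    _ ≤ θ*max (δ 1) (4/θ) := mul_le_mul_of_nonneg_left hθD hθpos.le
  have hθP2σ : 2*(θ*σ) ≤ θ*P := by
    have := mul_le_mul_of_nonneg_left hP2σ hθpos.le
    linarith
  have hM1 : 21*θ*σ + 16 ≤ 3*θ*(C - σ) := by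
    have hθσ : 0 < θ*σ := mul_pos hθpos hσ
    nlinarith [hCexp, hθDge, hθP2σ]
  have hM72 : 7/2*P ≤ C - σ := by
    rw [hCval]; linarith
  have hM2 : 2*σ ≤ θ*(C - σ)^2 := by
    have hsq72 : (7/2*P)*(7/2*P) ≤ (C-σ)*(C-σ) :=
      mul_self_le_mul_self (by positivity) hM72
    nlinarith [hθP, mul_le_mul_of_nonneg_left hsq72 hθpos.le,
      mul_pos hθpos (mul_pos hσ hσ)]
  -- apply the rate lemma
  have hrate := ial_seq_rate hθpos hσ hα0 hα2 hM1 hM2 hδ0 hMδ1 hrec1 hrec2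
  -- final assembly
  intro k hk
  obtain ⟨hK1, hKK', hK'K, hexp2⟩ := ial_rpow_facts hα0 hα2 k hk
  have hKpos : (0:ℝ) < (k:ℝ)^α := lt_of_lt_of_le one_pos hK1
  have hdk := hrate k hk
  have hIk := hI k hk
  rw [hη k hk] at hIk
  have hK2le : (k:ℝ)^α ≤ (k:ℝ)^(2*α) :=
    Real.rpow_le_rpow_of_exponent_le (by exact_mod_cast hk) (by linarith)
  have hηle : σ/((k:ℝ))^(2*α) ≤ σ/((k:ℝ))^α :=
    div_le_div_of_nonneg_left hσ.le hKpos hK2le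
  have hsum : δ k + σ/((k:ℝ))^(2*α) ≤ (C - σ)/((k:ℝ))^α + σ/((k:ℝ))^α := by
    linarith
  have hCc : (C - σ)/((k:ℝ))^α + σ/((k:ℝ))^α = C/((k:ℝ))^α := by
    rw [← add_div]; ring_nf
  have hfin : β/2*‖A (x (k+1)) - b‖^2 ≤ (C + Real.sqrt σ)/((k:ℝ))^α := by
    have hδk1 := hδ0 (k+1)
    have hsq : 0 ≤ Real.sqrt σ := Real.sqrt_nonneg σ
    have hCle : C/((k:ℝ))^α ≤ (C + Real.sqrt σ)/((k:ℝ))^α := by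
      exact (div_le_div_iff_of_pos_right hKpos).mpr (by linarith)
    calc β/2*‖A (x (k+1)) - b‖^2 ≤ δ k + σ/((k:ℝ))^(2*α) := by linarith
    _ ≤ C/((k:ℝ))^α := by rw [← hCc]; exact hsum
    _ ≤ (C + Real.sqrt σ)/((k:ℝ))^α := hCle
  have hfs : ‖A (x (k+1)) - b‖^2 = 2/β*(β/2*‖A (x (k+1)) - b‖^2) := by
    field_simp
  rw [hfs]
  exact mul_le_mul_of_nonneg_left hfin (by positivity)
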